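/- Let n ≥ 1, let u ∈ [0,1]^{2n}, and let w ∈ ℝⁿ satisfy max{u_i + u_{n+i} − 1, 0} ≤ w_i ≤ min{u_i, u_{n+i}} for every i ∈ [n]. Define the symmetric (2n+1) × (2n+1) real matrix W (rows and columns indexed by {0} ∪ [2n]) by: W_{00} = 1; W_{0i} = W_{i0} = u_i for i ∈ [2n]; W_{ii} = u_i for i ∈ [2n]; W_{i, n+i} = W_{n+i, i} = w_i for i ∈ [n]; and W_{ik} = u_i u_k for all other pairs i ≠ k with i, k ∈ [2n]. Then W is positive semidefinite. -/

import Mathlib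

private lemma quad_nonneg (a b c t s : ℝ) (ha : 0 ≤ a) (hc : 0 ≤ c)
    (h : b ^ 2 ≤ a * c) : 0 ≤ a * t ^ 2 + 2 * b * t * s + c * s ^ 2 := by
  rcases eq_or_lt_of_le ha with ha' | ha'
  · have hb2 : b ^ 2 = 0 := le_antisymm (by nlinarith) (sq_nonneg b)
    have hb : b = 0 := by
      have := sq_eq_zero_iff.mp hb2
      exact this
    subst hb
    rw [← ha']
    have := mul_nonneg hc (sq_nonneg s)
    nlinarith
  · nlinarith [sq_nonneg (a * t + b * s), mul_nonneg (sub_nonneg.2 h) (sq_nonneg s)]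

private lemma mccormick_sq (x y w : ℝ) (hx0 : 0 ≤ x) (hx1 : x ≤ 1)
    (hy0 : 0 ≤ y) (hy1 : y ≤ 1) (hw0 : 0 ≤ w) (hwxy : x + y - 1 ≤ w)
    (hwx : w ≤ x) (hwy : w ≤ y) :
    (w - x * y) ^ 2 ≤ (x * (1 - x)) * (y * (1 - y)) := by
  rcases le_total (x * y) w with h | h
  · have h1 : w - x * y ≤ x * (1 - y) := by nlinarith
    have h2 : w - x * y ≤ y * (1 - x) := by nlinarith
    have h3 : (0:ℝ) ≤ w - x * y := by linarith
    have h4 : (0:ℝ) ≤ x * (1 - y) := by nlinarith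
    nlinarith [mul_le_mul h1 h2 h3 h4]
  · have h1 : x * y - w ≤ x * y := by linarith
    have h2 : x * y - w ≤ (1 - x) * (1 - y) := by nlinarith
    have h3 : (0:ℝ) ≤ x * y - w := by linarith
    have h4 : (0:ℝ) ≤ x * y := mul_nonneg hx0 hy0
    nlinarith [mul_le_mul h1 h2 h3 h4]

/-- The moment matrix built from a McCormick-feasible point is
positive semidefinite.  Indices {0} ∪ [2n] are encoded as `Option (Fin n ⊕ Fin n)`,
with 0 ↦ `none`, i ↦ `some (Sum.inl i)` and n+i ↦ `some (Sum.inr i)`. -/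
theorem stmt_10 (n : ℕ) (hn : 1 ≤ n)
    (u : Fin n ⊕ Fin n → ℝ) (hu : ∀ i, u i ∈ Set.Icc (0 : ℝ) 1)
    (w : Fin n → ℝ)
    (hw : ∀ i : Fin n,
      max (u (Sum.inl i) + u (Sum.inr i) - 1) 0 ≤ w i ∧
      w i ≤ min (u (Sum.inl i)) (u (Sum.inr i)))
    (W : Matrix (Option (Fin n ⊕ Fin n)) (Option (Fin n ⊕ Fin n)) ℝ)
    (hW : ∀ i j, W i j =
      match i, j with
      | none, none => 1
      | none, some k => u k
      | some k, none => u k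
      | some k, some l =>
          if k = l then u k
          else
            match k, l with
            | Sum.inl k', Sum.inr l' => if k' = l' then w k' else u k * u l
            | Sum.inr k', Sum.inl l' => if k' = l' then w l' else u k * u l
            | _, _ => u k * u l) :
    W.PosSemidef := by
  rw [Matrix.posSemidef_iff_dotProduct_mulVec]
  constructor
  · -- Hermitian
    ext j k
    simp only [Matrix.conjTranspose_apply, star_trivial]
    rw [hW, hW]
    clear hW hw hu hn
    rcases j with _ | (j | j) <;> rcases k with _ | (k | k) <;>
      first
        | rfl
        | (rcases eq_or_ne j k with rfl | h
           · simp
           · simp [h, h.symm, mul_comm])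
  · intro x
    simp only [star_trivial]
    -- notation
    set a : Fin n → ℝ := fun i => u (Sum.inl i) with ha
    set c : Fin n → ℝ := fun i => u (Sum.inr i) with hc
    set t : Fin n → ℝ := fun i => x (some (Sum.inl i)) with ht
    set s : Fin n → ℝ := fun i => x (some (Sum.inr i)) with hs
    set S : ℝ := x none + ∑ k, u k * x (some k) with hS
    set m : Option (Fin n ⊕ Fin n) → ℝ := fun j => Option.elim j 0
      (Sum.elim
        (fun i => (a i - a i ^ 2) * t i + (w i - a i * c i) * s i)
        (fun i => (w i - a i * c i) * t i + (c i - c i ^ 2) * s i)) with hm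
    have sum_ite : ∀ (f g : Fin n → ℝ) (i : Fin n),
        (∑ i', (if i = i' then f i' else g i')) = (∑ i', g i') + (f i - g i) := by
      intro f g i
      have key : ∀ i' ∈ Finset.univ, (if i = i' then f i' else g i')
          = g i' + (if i = i' then f i' - g i' else 0) := by
        intro i' _; split_ifs with h <;> ring
      rw [Finset.sum_congr rfl key, Finset.sum_add_distrib, Finset.sum_ite_eq]
      simp
    have hv : ∀ j, W.mulVec x j = (Option.elim j 1 u) * S + m j := by
      intro j
      rcases j with _ | (j | j)
      · simp only [Matrix.mulVec, dotProduct, Fintype.sum_option]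
        simp only [hW]
        simp [hS, hm, mul_comm]
      · simp only [Matrix.mulVec, dotProduct, Fintype.sum_option,
          Fintype.sum_sum_type]
        simp only [hW]
        simp only [Sum.inl.injEq, reduceCtorEq, Option.some.injEq, if_false,
          ite_mul]
        rw [sum_ite (fun i' => u (Sum.inl j) * x (some (Sum.inl i')))
              (fun i' => u (Sum.inl j) * u (Sum.inl i') * x (some (Sum.inl i'))) j,
            sum_ite (fun i' => w j * x (some (Sum.inr i')))
              (fun i' => u (Sum.inl j) * u (Sum.inr i') * x (some (Sum.inr i'))) j]
        simp only [hS, hm, ha, hc, ht, hs, Option.elim, Sum.elim_inl, Sum.elim_inr, Fintype.sum_sum_type]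
        have e1 : (∑ i', u (Sum.inl j) * u (Sum.inl i') * x (some (Sum.inl i')))
            = u (Sum.inl j) * ∑ i', u (Sum.inl i') * x (some (Sum.inl i')) := by
          rw [Finset.mul_sum]; exact Finset.sum_congr rfl fun _ _ => by ring
        have e2 : (∑ i', u (Sum.inl j) * u (Sum.inr i') * x (some (Sum.inr i')))
            = u (Sum.inl j) * ∑ i', u (Sum.inr i') * x (some (Sum.inr i')) := by
          rw [Finset.mul_sum]; exact Finset.sum_congr rfl fun _ _ => by ring
        rw [e1, e2]
        ring
      · simp only [Matrix.mulVec, dotProduct, Fintype.sum_option,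
          Fintype.sum_sum_type]
        simp only [hW]
        simp only [Sum.inr.injEq, reduceCtorEq, Option.some.injEq, if_false,
          ite_mul]
        rw [sum_ite (fun i' => w i' * x (some (Sum.inl i')))
              (fun i' => u (Sum.inr j) * u (Sum.inl i') * x (some (Sum.inl i'))) j,
            sum_ite (fun i' => u (Sum.inr j) * x (some (Sum.inr i')))
              (fun i' => u (Sum.inr j) * u (Sum.inr i') * x (some (Sum.inr i'))) j]
        simp only [hS, hm, ha, hc, ht, hs, Option.elim, Sum.elim_inl, Sum.elim_inr, Fintype.sum_sum_type]
        have e1 : (∑ i', u (Sum.inr j) * u (Sum.inl i') * x (some (Sum.inl i')))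
            = u (Sum.inr j) * ∑ i', u (Sum.inl i') * x (some (Sum.inl i')) := by
          rw [Finset.mul_sum]; exact Finset.sum_congr rfl fun _ _ => by ring
        have e2 : (∑ i', u (Sum.inr j) * u (Sum.inr i') * x (some (Sum.inr i')))
            = u (Sum.inr j) * ∑ i', u (Sum.inr i') * x (some (Sum.inr i')) := by
          rw [Finset.mul_sum]; exact Finset.sum_congr rfl fun _ _ => by ring
        rw [e1, e2]
        ring
    have key : dotProduct x (W.mulVec x) =
        S ^ 2 + ∑ i, ((a i - a i ^ 2) * t i ^ 2
          + 2 * (w i - a i * c i) * t i * s i + (c i - c i ^ 2) * s i ^ 2) := by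
      simp only [dotProduct]
      rw [Finset.sum_congr rfl (fun j _ => by rw [hv j])]
      simp only [mul_add]
      rw [Finset.sum_add_distrib]
      congr 1
      · have : ∀ j ∈ Finset.univ, x j * (Option.elim j 1 u * S)
            = (x j * Option.elim j 1 u) * S := fun j _ => by ring
        rw [Finset.sum_congr rfl this, ← Finset.sum_mul]
        have : (∑ j, x j * Option.elim j 1 u) = S := by
          simp only [Fintype.sum_option, Option.elim, hS]
          rw [Finset.sum_congr rfl (fun k _ => mul_comm (x (some k)) (u k))]
          ring
        rw [this]; ring
      · simp only [Fintype.sum_option, hm, Option.elim_none, Option.elim_some,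
          Sum.elim_inl, Sum.elim_inr, Fintype.sum_sum_type, mul_zero,
          zero_add, ht, hs]
        rw [← Finset.sum_add_distrib]
        apply Finset.sum_congr rfl
        intro i _
        ring
    rw [key]
    have hnn : ∀ i ∈ Finset.univ, (0:ℝ) ≤ (a i - a i ^ 2) * t i ^ 2
        + 2 * (w i - a i * c i) * t i * s i + (c i - c i ^ 2) * s i ^ 2 := by
      intro i _
      obtain ⟨hx0, hx1⟩ := hu (Sum.inl i)
      obtain ⟨hy0, hy1⟩ := hu (Sum.inr i)
      obtain ⟨hwl, hwr⟩ := hw i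
      have h1 : u (Sum.inl i) + u (Sum.inr i) - 1 ≤ w i :=
        le_trans (le_max_left _ _) hwl
      have h2 : (0:ℝ) ≤ w i := le_trans (le_max_right _ _) hwl
      have h3 : w i ≤ u (Sum.inl i) := le_trans hwr (min_le_left _ _)
      have h4 : w i ≤ u (Sum.inr i) := le_trans hwr (min_le_right _ _)
      have hai : a i = u (Sum.inl i) := rfl
      have hci : c i = u (Sum.inr i) := rfl
      rw [hai, hci]
      apply quad_nonneg
      · nlinarith
      · nlinarith
      · have := mccormick_sq (u (Sum.inl i)) (u (Sum.inr i)) (w i)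
          hx0 hx1 hy0 hy1 h2 h1 h3 h4
        nlinarith
    exact add_nonneg (sq_nonneg S) (Finset.sum_nonneg hnn)
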